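/- For the map d₁ : Λ → Λ² given by e⁰₀ ↦ (1−α)xe¹₀ + (1−β)ye¹₁, xe⁰₀ ↦ (1+qβ)yxe¹₁, ye⁰₀ ↦ −(q+α)yxe¹₀, yxe⁰₀ ↦ 0, the kernel has dimension 3 if (α,β) = (−q,−q⁻¹); dimension 2 if (α,β)=(1,1), or α=−q and β≠−q⁻¹, or α≠−q and β=−q⁻¹; and dimension 1 otherwise — provided char k ≠ 2. (In particular dim_k HH⁰(Λ, ₁Λ_ψ) = dim_k Ker d₁ is given by this formula.) -/

import Mathlib

/-- The matrix of the differential `dₙ : Λⁿ → Λ^{n+1}` of the complex computing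
`HH^*(Λ, ₁Λ_ψ)` for `ψ(x) = αx`, `ψ(y) = βy`, in the standard basis
`{eᵢ, xeᵢ, yeᵢ, yxeᵢ}` (encoded by `Fin 4` as `0 ↦ eᵢ, 1 ↦ xeᵢ, 2 ↦ yeᵢ, 3 ↦ yxeᵢ`):
`eᵢ^{n−1} ↦ [1+(−1)ⁿqⁱα]xeᵢⁿ + [q^{n−i−1}+(−1)ⁿβ]ye^n_{i+1}`,
`xeᵢ^{n−1} ↦ [q^{n−i−1}+(−1)^{n+1}qβ]yxe^n_{i+1}`,
`yeᵢ^{n−1} ↦ [−q+(−1)ⁿqⁱα]yxeᵢⁿ`, `yxeᵢ^{n−1} ↦ 0`. -/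
def Dmat (k : Type) [Field k] (q α β : k) (n : ℕ) :
    Matrix (Fin (n + 1) × Fin 4) (Fin n × Fin 4) k := fun jb ia =>
  if jb.2 = 1 ∧ ia.2 = 0 ∧ (jb.1 : ℕ) = (ia.1 : ℕ) then
    1 + (-1 : k) ^ n * q ^ (ia.1 : ℕ) * α
  else if jb.2 = 2 ∧ ia.2 = 0 ∧ (jb.1 : ℕ) = (ia.1 : ℕ) + 1 then
    q ^ (n - (ia.1 : ℕ) - 1) + (-1 : k) ^ n * β
  else if jb.2 = 3 ∧ ia.2 = 1 ∧ (jb.1 : ℕ) = (ia.1 : ℕ) + 1 then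
    q ^ (n - (ia.1 : ℕ) - 1) + (-1 : k) ^ (n + 1) * q * β
  else if jb.2 = 3 ∧ ia.2 = 2 ∧ (jb.1 : ℕ) = (ia.1 : ℕ) then
    -q + (-1 : k) ^ n * q ^ (ia.1 : ℕ) * α
  else 0

/-- The differential `dₙ : Λⁿ → Λ^{n+1}` as a `k`-linear map. -/
noncomputable def dMap (k : Type) [Field k] (q α β : k) (n : ℕ) :
    (Fin n × Fin 4 → k) →ₗ[k] (Fin (n + 1) × Fin 4 → k) :=
  (Dmat k q α β n).mulVecLin

section Aux
open Matrix LinearMap Module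
variable (k : Type) [Field k]

lemma mem_ker_iff_aux (q α β : k) (v : Fin 1 × Fin 4 → k) :
    v ∈ LinearMap.ker (dMap k q α β 1) ↔
      (1 - α) * v (0,0) = 0 ∧ (1 - β) * v (0,0) = 0 ∧
      (1 + q*β) * v (0,1) = 0 ∧ (q + α) * v (0,2) = 0 := by
  simp [dMap, LinearMap.mem_ker, funext_iff, Prod.forall, Fin.forall_fin_succ,
    Fin.forall_fin_two, Matrix.mulVecLin_apply, Matrix.mulVec, dotProduct,
    Fintype.sum_prod_type, Fin.sum_univ_succ, Fin.sum_univ_four, Dmat]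
  norm_num [Fin.ext_iff, sub_eq_add_neg, mul_eq_zero, eq_neg_iff_add_eq_zero,
    (show ((3:Fin 4):ℕ) = 3 from rfl)]
  rw [show (q + α = 0) ↔ (-q + -α = 0) by rw [← neg_add, neg_eq_zero]]
  tauto

lemma finrank_ker_diag_aux [DecidableEq k] {m : Type} [Fintype m] [DecidableEq m]
    (w : m → k) :
    finrank k ↥(LinearMap.ker (Matrix.diagonal w).mulVecLin) =
      Fintype.card {i // w i = 0} := by
  have h := LinearMap.finrank_range_add_finrank_ker (Matrix.diagonal w).mulVecLin
  have hr : finrank k ↥(LinearMap.range (Matrix.diagonal w).mulVecLin) =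
      Fintype.card {i // w i ≠ 0} := Matrix.rank_diagonal w
  have h2 : Fintype.card {i // ¬ w i = 0} = Fintype.card m - Fintype.card {i // w i = 0} :=
    Fintype.card_subtype_compl _
  have h3 : Fintype.card {i // w i = 0} ≤ Fintype.card m := Fintype.card_subtype_le _
  rw [hr] at h
  simp only [Module.finrank_pi, ne_eq] at h
  omega

lemma card_prod_eq (P : Fin 4 → Prop) [DecidablePred P] :
    Fintype.card {p : Fin 1 × Fin 4 // P p.2} = Fintype.card {j : Fin 4 // P j} :=
  Fintype.card_congr ⟨fun p => ⟨p.1.2, p.2⟩, fun j => ⟨(0, j.1), j.2⟩,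
    fun ⟨⟨a, b⟩, h⟩ => by simp [Subsingleton.elim (0 : Fin 1) a],
    fun ⟨j, h⟩ => rfl⟩

lemma dim_case [DecidableEq k] (q α β : k) (c₀ c₁ c₂ : k)
    (hiff : ∀ v : Fin 1 × Fin 4 → k,
      ((1 - α) * v (0,0) = 0 ∧ (1 - β) * v (0,0) = 0 ∧
        (1 + q*β) * v (0,1) = 0 ∧ (q + α) * v (0,2) = 0) ↔
      (c₀ * v (0,0) = 0 ∧ c₁ * v (0,1) = 0 ∧ c₂ * v (0,2) = 0)) :
    finrank k ↥(LinearMap.ker (dMap k q α β 1)) =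
      Fintype.card {j : Fin 4 // ![c₀, c₁, c₂, 0] j = 0} := by
  have hker : LinearMap.ker (dMap k q α β 1) =
      LinearMap.ker (Matrix.diagonal (fun p : Fin 1 × Fin 4 => ![c₀, c₁, c₂, 0] p.2)).mulVecLin := by
    ext v
    rw [mem_ker_iff_aux k q α β v, hiff v]
    simp [LinearMap.mem_ker, Matrix.mulVecLin_apply, Matrix.mulVec_diagonal, funext_iff,
      Prod.forall, Fin.forall_fin_succ, Fin.forall_fin_two]
  rw [hker, finrank_ker_diag_aux]
  exact card_prod_eq (fun j => ![c₀, c₁, c₂, 0] j = 0)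

open Classical in
lemma card4 (k : Type) [Field k] (c₀ c₁ c₂ : k) :
    Fintype.card {j : Fin 4 // ![c₀, c₁, c₂, 0] j = 0} =
      (if c₀ = 0 then 1 else 0) + (if c₁ = 0 then 1 else 0) +
        (if c₂ = 0 then 1 else 0) + 1 := by
  rw [Fintype.card_subtype, Finset.card_filter, Fin.sum_univ_four]
  simp
  congr

end Aux

open Matrix LinearMap Module in
/-- for `char k ≠ 2`, the kernel of
`d₁ : e⁰₀ ↦ (1−α)xe¹₀ + (1−β)ye¹₁, xe⁰₀ ↦ (1+qβ)yxe¹₁, ye⁰₀ ↦ −(q+α)yxe¹₀, yxe⁰₀ ↦ 0`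
has dimension 3 if `(α,β) = (−q,−q⁻¹)`; dimension 2 if `(α,β) = (1,1)`, or `α = −q`
and `β ≠ −q⁻¹`, or `α ≠ −q` and `β = −q⁻¹`; and dimension 1 otherwise.
(In particular `dim HH⁰(Λ, ₁Λ_ψ) = dim Ker d₁` is given by this formula.) -/
theorem stmt8 (k : Type) [Field k] (q α β : k) (hq : q ≠ 0)
    (hq' : ∀ m : ℕ, 0 < m → q ^ m ≠ 1) (hα : α ≠ 0) (hβ : β ≠ 0)
    (hchar : ringChar k ≠ 2) :
    (α = -q ∧ β = -q⁻¹ →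
      Module.finrank k ↥(LinearMap.ker (dMap k q α β 1)) = 3) ∧
    ((α = 1 ∧ β = 1) ∨ (α = -q ∧ β ≠ -q⁻¹) ∨ (α ≠ -q ∧ β = -q⁻¹) →
      Module.finrank k ↥(LinearMap.ker (dMap k q α β 1)) = 2) ∧
    (¬(α = -q ∧ β = -q⁻¹) →
      ¬((α = 1 ∧ β = 1) ∨ (α = -q ∧ β ≠ -q⁻¹) ∨ (α ≠ -q ∧ β = -q⁻¹)) →
      Module.finrank k ↥(LinearMap.ker (dMap k q α β 1)) = 1) := by
  classical
  have hq2 : q ≠ -1 := fun h => hq' 2 two_pos (by rw [h]; ring)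
  have h1q : (1 : k) + q ≠ 0 := fun h => hq2 (by linear_combination h)
  have h1qi : (1 : k) + q⁻¹ ≠ 0 := by
    intro h
    apply hq2
    have h' : q⁻¹ = -1 := by linear_combination h
    rw [← inv_inv q, h']; norm_num
  have e3 : (1 : k) + q * -q⁻¹ = 0 := by field_simp; norm_num
  refine ⟨?_, ?_, ?_⟩
  · rintro ⟨rfl, rfl⟩
    have hd := dim_case k q (-q) (-q⁻¹) (1 + q) 0 0 (fun v => by
      constructor
      · rintro ⟨h1, -, -, -⟩
        exact ⟨by linear_combination h1, by simp, by simp⟩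
      · rintro ⟨h1, -, -⟩
        have hv : v (0, 0) = 0 := (mul_eq_zero.mp h1).resolve_left h1q
        exact ⟨by rw [hv, mul_zero], by rw [hv, mul_zero], by rw [e3, zero_mul], by ring⟩)
    rw [hd, card4]
    simp [h1q]
  · rintro (⟨rfl, rfl⟩ | ⟨rfl, hb⟩ | ⟨ha, rfl⟩)
    · have hd := dim_case k q 1 1 0 (1 + q) (q + 1) (fun v => by
        constructor
        · rintro ⟨-, -, h3, h4⟩
          exact ⟨by simp, by linear_combination h3, h4⟩
        · rintro ⟨-, h2, h3⟩
          exact ⟨by ring, by ring, by linear_combination h2, h3⟩)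
      rw [hd, card4]
      have h2 : (1 : k) + q ≠ 0 := h1q
      have h3 : q + 1 ≠ 0 := fun h => h1q (by linear_combination h)
      simp [h2, h3]
    · have hc1 : 1 + q * β ≠ 0 := by
        intro h
        exact hb (by field_simp; linear_combination h)
      have hd := dim_case k q (-q) β (1 + q) (1 + q * β) 0 (fun v => by
        constructor
        · rintro ⟨h1, -, h3, -⟩
          exact ⟨by linear_combination h1, h3, by simp⟩
        · rintro ⟨h1, h2, -⟩
          have hv : v (0, 0) = 0 := (mul_eq_zero.mp h1).resolve_left h1q
          exact ⟨by rw [hv, mul_zero], by rw [hv, mul_zero], h2, by ring⟩)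
      rw [hd, card4]
      simp [h1q, hc1]
    · have hc2 : q + α ≠ 0 := fun h => ha (by linear_combination h)
      have hd := dim_case k q α (-q⁻¹) (1 + q⁻¹) 0 (q + α) (fun v => by
        constructor
        · rintro ⟨-, h2, -, h4⟩
          exact ⟨by linear_combination h2, by simp, h4⟩
        · rintro ⟨h1, -, h3⟩
          have hv : v (0, 0) = 0 := (mul_eq_zero.mp h1).resolve_left h1qi
          exact ⟨by rw [hv, mul_zero], by rw [hv, mul_zero], by rw [e3, zero_mul], h3⟩)
      rw [hd, card4]
      simp [h1qi, hc2]
  · intro hn1 hn2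
    have hA : α ≠ -q := by tauto
    have hB : β ≠ -q⁻¹ := by tauto
    have hAB : ¬(α = 1 ∧ β = 1) := by tauto
    have hc2 : q + α ≠ 0 := fun h => hA (by linear_combination h)
    have hc1 : 1 + q * β ≠ 0 := by
      intro h
      exact hB (by field_simp; linear_combination h)
    by_cases h1 : α = 1
    · subst h1
      have hb1 : β ≠ 1 := by tauto
      have hc0 : 1 - β ≠ 0 := fun h => hb1 (by linear_combination -h)
      have hd := dim_case k q 1 β (1 - β) (1 + q * β) (q + 1) (fun v => by
        constructor
        · rintro ⟨-, h2, h3, h4⟩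
          exact ⟨h2, h3, h4⟩
        · rintro ⟨h1', h2', h3'⟩
          exact ⟨by ring, h1', h2', h3'⟩)
      rw [hd, card4]
      simp [hc0, hc1, hc2]
    · have hc0 : 1 - α ≠ 0 := fun h => h1 (by linear_combination -h)
      have hd := dim_case k q α β (1 - α) (1 + q * β) (q + α) (fun v => by
        constructor
        · rintro ⟨h1', -, h3, h4⟩
          exact ⟨h1', h3, h4⟩
        · rintro ⟨h1', h2', h3'⟩
          have hv : v (0, 0) = 0 := (mul_eq_zero.mp h1').resolve_left hc0
          exact ⟨h1', by rw [hv, mul_zero], h2', h3'⟩)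
      rw [hd, card4]
      simp [hc0, hc1, hc2]
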